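/- Let G = (V, E) be a finite graph with positive vertex weights w, and let Γ be its set of maximal cliques with each vertex v lying in n_v maximal cliques. Construct G'' on the vertex set V_ε = {(v, C) : v ∈ V, C ∈ Γ, v ∈ C}, with (v,C) adjacent to (u,C') iff v ≠ u and (v,u) ∈ E, and weights w_ε(v,C) = w(v)/n_v. Then the weighted independence numbers satisfy α(G, w) = α(G'', w_ε). -/

import Mathlib

open Finset
open scoped Classical

variable {V : Type*}

/-- `C` is a maximal clique of `G`. -/
def IsMaxClique [DecidableEq V] (G : SimpleGraph V) (C : Finset V) : Prop :=
  G.IsClique (C : Set V) ∧ ∀ C' : Finset V, G.IsClique (C' : Set V) → C ⊆ C' → C = C'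

/-- The number `n_v` of maximal cliques of `G` containing `v`. -/
noncomputable def numMaxCliques [DecidableEq V] (G : SimpleGraph V) (v : V) : ℕ :=
  Nat.card {C : Finset V // IsMaxClique G C ∧ v ∈ C}

/-- The weighted independence number `α(G, w)`: the supremum of total weights of
sets of pairwise non-adjacent vertices. -/
noncomputable def weightedIndepNum {W : Type*} [Fintype W] (G : SimpleGraph W)
    (w : W → ℝ) : ℝ :=
  sSup {t : ℝ | ∃ s : Finset W,
    (s : Set W).Pairwise (fun a b => ¬ G.Adj a b) ∧ t = ∑ v ∈ s, w v}

/-- The lifted graph `G''` on pairs `(v, C)` of a vertex together with a maximal clique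
containing it: `(v, C)` and `(u, C')` are adjacent iff `v ≠ u` and `v, u` are adjacent
in `G`. -/
def liftedGraph [DecidableEq V] (G : SimpleGraph V) :
    SimpleGraph {p : V × Finset V // IsMaxClique G p.2 ∧ p.1 ∈ p.2} where
  Adj p q := p.1.1 ≠ q.1.1 ∧ G.Adj p.1.1 q.1.1
  symm := by constructor; intro p q h; exact ⟨h.1.symm, h.2.symm⟩
  loopless := by constructor; intro p h; exact h.1 rfl

lemma exists_maxClique_mem [Fintype V] [DecidableEq V] (G : SimpleGraph V) (v : V) :
    ∃ C : Finset V, IsMaxClique G C ∧ v ∈ C := by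
  classical
  set S : Finset (Finset V) := univ.filter (fun C => G.IsClique (C : Set V) ∧ v ∈ C) with hS
  have hne : S.Nonempty := ⟨{v}, by simp [hS, SimpleGraph.isClique_singleton]⟩
  obtain ⟨C, hC, hmax⟩ := S.exists_max_image Finset.card hne
  simp only [hS, mem_filter, mem_univ, true_and] at hC hmax
  refine ⟨C, ⟨hC.1, fun C' hC' hsub => ?_⟩, hC.2⟩
  exact Finset.eq_of_subset_of_card_le hsub (hmax C' ⟨hC', hsub hC.2⟩)

lemma numMaxCliques_pos [Fintype V] [DecidableEq V] (G : SimpleGraph V) (v : V) :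
    0 < numMaxCliques G v := by
  have : Nonempty {C : Finset V // IsMaxClique G C ∧ v ∈ C} := by
    obtain ⟨C, h⟩ := exists_maxClique_mem G v; exact ⟨⟨C, h⟩⟩
  exact Nat.card_pos

lemma fiber_card [Fintype V] [DecidableEq V] (G : SimpleGraph V) (v : V) :
    (univ.filter
      (fun p : {p : V × Finset V // IsMaxClique G p.2 ∧ p.1 ∈ p.2} => p.1.1 = v)).card
      = numMaxCliques G v := by
  classical
  rw [← Fintype.card_subtype]
  rw [numMaxCliques, Nat.card_eq_fintype_card]
  exact Fintype.card_congr
    { toFun := fun q => ⟨q.1.1.2, q.1.2.1, by have h := q.1.2.2; rw [q.2] at h; exact h⟩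
      invFun := fun C => ⟨⟨(v, C.1), ⟨C.2.1, C.2.2⟩⟩, rfl⟩
      left_inv := fun q => by
        obtain ⟨⟨⟨u, C⟩, h⟩, he⟩ := q
        simp only at he
        subst he
        rfl
      right_inv := fun C => rfl }

lemma weightSet_bddAbove {W : Type*} [Fintype W] (G : SimpleGraph W) (w : W → ℝ) :
    BddAbove {t : ℝ | ∃ s : Finset W,
      (s : Set W).Pairwise (fun a b => ¬ G.Adj a b) ∧ t = ∑ v ∈ s, w v} := by
  apply Set.Finite.bddAbove
  apply Set.Finite.subset (Set.finite_range (fun s : Finset W => ∑ v ∈ s, w v))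
  rintro t ⟨s, -, rfl⟩
  exact ⟨s, rfl⟩

lemma weightSet_nonempty {W : Type*} [Fintype W] (G : SimpleGraph W) (w : W → ℝ) :
    Set.Nonempty {t : ℝ | ∃ s : Finset W,
      (s : Set W).Pairwise (fun a b => ¬ G.Adj a b) ∧ t = ∑ v ∈ s, w v} :=
  ⟨0, ∅, by simp, by simp⟩

/-- The weighted independence number is preserved under the ε-graph lifting:
`α(G, w) = α(G'', w_ε)` with `w_ε(v, C) = w(v) / n_v`. -/
theorem stmt_16 [Fintype V] [DecidableEq V] (G : SimpleGraph V) (w : V → ℝ)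
    (hw : ∀ v, 0 < w v) :
    weightedIndepNum G w =
      weightedIndepNum (liftedGraph G)
        (fun p => w p.1.1 / (numMaxCliques G p.1.1 : ℝ)) := by
  classical
  set wε : {p : V × Finset V // IsMaxClique G p.2 ∧ p.1 ∈ p.2} → ℝ :=
    fun p => w p.1.1 / (numMaxCliques G p.1.1 : ℝ) with hwε
  set A := {t : ℝ | ∃ s : Finset V,
    (s : Set V).Pairwise (fun a b => ¬ G.Adj a b) ∧ t = ∑ v ∈ s, w v} with hA
  set B := {t : ℝ | ∃ s : Finset {p : V × Finset V // IsMaxClique G p.2 ∧ p.1 ∈ p.2},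
    (s : Set _).Pairwise (fun a b => ¬ (liftedGraph G).Adj a b) ∧ t = ∑ p ∈ s, wε p} with hB
  have hn : ∀ v, ((numMaxCliques G v : ℝ)) ≠ 0 := fun v => by
    exact_mod_cast (numMaxCliques_pos G v).ne'
  have hAB : A ⊆ B := by
    rintro t ⟨s, hs, rfl⟩
    refine ⟨univ.filter (fun p => p.1.1 ∈ s), ?_, ?_⟩
    · intro p hp q hq hpq hadj
      simp only [coe_filter, Set.mem_setOf_eq] at hp hq
      exact hs hp.2 hq.2 hadj.1 hadj.2
    · rw [← Finset.sum_fiberwise_of_maps_to (g := fun p => p.1.1)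
        (fun p hp => (mem_filter.1 hp).2) wε]
      refine Finset.sum_congr rfl (fun v hv => ?_)
      have hfil : (univ.filter (fun p => p.1.1 ∈ s)).filter (fun p => p.1.1 = v)
          = univ.filter (fun p : {p : V × Finset V // IsMaxClique G p.2 ∧ p.1 ∈ p.2} =>
              p.1.1 = v) := by
        ext p
        simp only [mem_filter, mem_univ, true_and, and_iff_right_iff_imp]
        rintro rfl; exact hv
      rw [hfil]
      have hsum : ∀ p ∈ univ.filter
          (fun p : {p : V × Finset V // IsMaxClique G p.2 ∧ p.1 ∈ p.2} => p.1.1 = v),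
          wε p = w v / (numMaxCliques G v : ℝ) := by
        intro p hp
        have := (mem_filter.1 hp).2
        rw [hwε]; simp only [this]
      rw [Finset.sum_congr rfl hsum, Finset.sum_const, fiber_card, nsmul_eq_mul,
        mul_comm, div_mul_cancel₀ _ (hn v)]
  apply le_antisymm
  · apply csSup_le (weightSet_nonempty G w)
    intro t ht
    exact le_csSup (weightSet_bddAbove _ _) (hAB ht)
  · apply csSup_le (weightSet_nonempty _ _)
    rintro t ⟨s', hs', rfl⟩
    set s : Finset V := s'.image (fun p => p.1.1) with hsdef
    have hsind : (s : Set V).Pairwise (fun a b => ¬ G.Adj a b) := by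
      intro u hu v hv huv hadj
      simp only [hsdef, coe_image, Set.mem_image, mem_coe] at hu hv
      obtain ⟨p, hp, rfl⟩ := hu
      obtain ⟨q, hq, rfl⟩ := hv
      have hpq : p ≠ q := fun h => huv (by rw [h])
      exact hs' hp hq hpq ⟨huv, hadj⟩
    have hle : ∑ p ∈ s', wε p ≤ ∑ v ∈ s, w v := by
      have heq : ∑ v ∈ s, ∑ p ∈ s'.filter (fun p => p.1.1 = v), wε p = ∑ p ∈ s', wε p :=
        Finset.sum_fiberwise_of_maps_to (fun p hp => Finset.mem_image_of_mem _ hp) wε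
      rw [← heq]
      refine Finset.sum_le_sum (fun v hv => ?_)
      have hsum : ∀ p ∈ s'.filter (fun p => p.1.1 = v),
          wε p = w v / (numMaxCliques G v : ℝ) := by
        intro p hp
        have := (mem_filter.1 hp).2
        rw [hwε]; simp only [this]
      rw [Finset.sum_congr rfl hsum, Finset.sum_const, nsmul_eq_mul]
      have hcard : ((s'.filter (fun p => p.1.1 = v)).card : ℝ) ≤ numMaxCliques G v := by
        rw [← fiber_card G v]
        exact_mod_cast Finset.card_le_card (fun p hp =>
          mem_filter.2 ⟨mem_univ _, (mem_filter.1 hp).2⟩)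
      calc ((s'.filter (fun p => p.1.1 = v)).card : ℝ) * (w v / (numMaxCliques G v : ℝ))
          ≤ (numMaxCliques G v : ℝ) * (w v / (numMaxCliques G v : ℝ)) := by
            exact mul_le_mul_of_nonneg_right hcard
              (div_nonneg (hw v).le (Nat.cast_nonneg _))
        _ = w v := by rw [mul_comm, div_mul_cancel₀ _ (hn v)]
    exact le_trans hle (le_csSup (weightSet_bddAbove _ _) ⟨s, hsind, rfl⟩)
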